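/- Let φ be an endomorphism of the free inverse monoid M_A and let φ̄ be the induced endomorphism of the free group F_A (defined by φ̄(σ'(m)) = σ'(φ(m)) where σ': M_A → F_A is the canonical surjection). Then for u ∈ M_A, u ∈ Fix(φ) if and only if u u⁻¹ ∈ Fix(φ) and σ'(u) ∈ Fix(φ̄). -/

import Mathlib

def winv {A : Type*} (w : FreeMonoid (A × Bool)) : FreeMonoid (A × Bool) :=
  FreeMonoid.ofList ((FreeMonoid.toList w).reverse.map fun p => (p.1, !p.2))

def vagner (A : Type*) : Con (FreeMonoid (A × Bool)) :=
  conGen fun x y =>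
    (∃ u : FreeMonoid (A × Bool), x = u * winv u * u ∧ y = u) ∨
    (∃ u v : FreeMonoid (A × Bool),
      x = u * winv u * (v * winv v) ∧ y = v * winv v * (u * winv u))

lemma winv_mul {A : Type*} (a b : FreeMonoid (A × Bool)) : winv (a*b) = winv b * winv a := by
  simp [winv, FreeMonoid.toList_mul, ← FreeMonoid.ofList_append]
lemma winv_winv {A : Type*} (a : FreeMonoid (A × Bool)) : winv (winv a) = a := by
  simp only [winv, FreeMonoid.toList_ofList, List.map_reverse, List.reverse_reverse,
    List.map_map]
  have : ((fun p : A × Bool => (p.1, !p.2)) ∘ fun p => (p.1, !p.2)) = id := by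
    funext p; simp
  rw [this, List.map_id, FreeMonoid.ofList_toList]

lemma winv_of {A : Type*} (p : A × Bool) : winv (FreeMonoid.of p) = FreeMonoid.of (p.1, !p.2) := by
  simp [winv]

lemma vagner_winv {A : Type*} {a b : FreeMonoid (A × Bool)} (h : vagner A a b) :
    vagner A (winv a) (winv b) := by
  induction h with
  | of x y h =>
    rcases h with ⟨u, hx, hy⟩ | ⟨u, v, hx, hy⟩
    · rw [hx, hy]
      exact ConGen.Rel.of _ _ (Or.inl ⟨winv u, by simp [winv_mul, mul_assoc], rfl⟩)
    · rw [hx, hy]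
      exact ConGen.Rel.of _ _ (Or.inr ⟨v, u, by simp [winv_mul, winv_winv, mul_assoc],
        by simp [winv_mul, winv_winv, mul_assoc]⟩)
  | refl => exact ConGen.Rel.refl _
  | symm _ ih => exact ConGen.Rel.symm ih
  | trans _ _ ih1 ih2 => exact ConGen.Rel.trans ih1 ih2
  | mul _ _ ih1 ih2 => rw [winv_mul, winv_mul]; exact ConGen.Rel.mul ih2 ih1

def st {A : Type*} : (vagner A).Quotient → (vagner A).Quotient :=
  Quotient.map' winv fun _ _ h => vagner_winv h

lemma st_mk {A : Type*} (w : FreeMonoid (A × Bool)) :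
    st (w : (vagner A).Quotient) = ↑(winv w) := rfl

section Alg
variable {A : Type*}
abbrev QV (A : Type*) := (vagner A).Quotient

lemma st_mul (x y : QV A) : st (x * y) = st y * st x := by
  induction x using Quotient.inductionOn' with | h a =>
  induction y using Quotient.inductionOn' with | h b =>
  show st ((a : QV A) * (b : QV A)) = st (b : QV A) * st (a : QV A)
  rw [← Con.coe_mul, st_mk, st_mk, st_mk, ← Con.coe_mul, winv_mul]

lemma st_st (x : QV A) : st (st x) = x := by
  induction x using Quotient.inductionOn' with | h a =>
  show st (st (a : QV A)) = (a : QV A)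
  rw [st_mk, st_mk, winv_winv]

lemma tri (x : QV A) : x * st x * x = x := by
  induction x using Quotient.inductionOn' with | h a =>
  show (a : QV A) * st (a : QV A) * (a : QV A) = (a : QV A)
  rw [st_mk, ← Con.coe_mul, ← Con.coe_mul, Con.eq]
  exact ConGen.Rel.of _ _ (Or.inl ⟨a, rfl, rfl⟩)

lemma comm0 (x y : QV A) : (x * st x) * (y * st y) = (y * st y) * (x * st x) := by
  induction x using Quotient.inductionOn' with | h a =>
  induction y using Quotient.inductionOn' with | h b =>
  show ((a : QV A) * st (a : QV A)) * ((b : QV A) * st (b : QV A))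
      = ((b : QV A) * st (b : QV A)) * ((a : QV A) * st (a : QV A))
  rw [st_mk, st_mk, ← Con.coe_mul, ← Con.coe_mul, ← Con.coe_mul, ← Con.coe_mul, Con.eq]
  exact ConGen.Rel.of _ _ (Or.inr ⟨a, b, rfl, rfl⟩)

lemma tri' (x : QV A) : st x * x * st x = st x := by
  have := tri (st x); rwa [st_st] at this

lemma idem_P (x : QV A) : (x * st x) * (x * st x) = x * st x := by
  calc (x * st x) * (x * st x) = (x * st x * x) * st x := by simp [mul_assoc]
  _ = x * st x := by rw [tri]

lemma idem_st_mul (x : QV A) : (st x * x) * (st x * x) = st x * x := by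
  have := idem_P (st x); rwa [st_st] at this

lemma comm1 (x y : QV A) : (x * st x) * (st y * y) = (st y * y) * (x * st x) := by
  have := comm0 x (st y); rwa [st_st] at this

lemma idem_eq_st (e : QV A) (he : e * e = e) : st e = e := by
  have hgf : (st e * e) * (e * st e) = st e := by
    calc (st e * e) * (e * st e) = st e * (e * e) * st e := by simp [mul_assoc]
    _ = st e * e * st e := by rw [he]
    _ = st e := tri' e
  have hfg : (e * st e) * (st e * e) = st e := by
    have := comm1 e e; rw [this]; exact hgf
  have hff := idem_P e
  have hgg := idem_st_mul e
  have stst : st e * st e = st e := by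
    calc st e * st e = ((e * st e) * (st e * e)) * ((e * st e) * (st e * e)) := by
          rw [hfg]
    _ = (e * st e) * ((st e * e) * (e * st e)) * (st e * e) := by simp [mul_assoc]
    _ = (e * st e) * ((e * st e) * (st e * e)) * (st e * e) := by rw [comm1 e e]
    _ = ((e * st e) * (e * st e)) * ((st e * e) * (st e * e)) := by simp [mul_assoc]
    _ = (e * st e) * (st e * e) := by rw [hff, hgg]
    _ = st e := hfg
  calc st e = (e * st e) * (st e * e) := hfg.symm
  _ = e * (st e * st e) * e := by simp [mul_assoc]
  _ = e * st e * e := by rw [stst]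
  _ = e := tri e

lemma idem_comm (e f : QV A) (he : e * e = e) (hf : f * f = f) : e * f = f * e := by
  have h1 := comm0 e f
  rw [idem_eq_st e he, idem_eq_st f hf, he, hf] at h1
  exact h1

lemma idem_mul (e f : QV A) (he : e * e = e) (hf : f * f = f) : (e * f) * (e * f) = e * f := by
  have hc := idem_comm f e hf he
  calc (e * f) * (e * f) = e * (f * e) * f := by simp [mul_assoc]
  _ = e * (e * f) * f := by rw [hc]
  _ = (e * e) * (f * f) := by simp [mul_assoc]
  _ = e * f := by rw [he, hf]

lemma st_unique (x s : QV A) (h1 : x * s * x = x) (h2 : s * x * s = s) : s = st x := by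
  have hxs : (x * s) * (x * s) = x * s := by
    calc (x * s) * (x * s) = (x * s * x) * s := by simp [mul_assoc]
    _ = x * s := by rw [h1]
  have hsx : (s * x) * (s * x) = s * x := by
    calc (s * x) * (s * x) = (s * x * s) * x := by simp [mul_assoc]
    _ = s * x := by rw [h2]
  have step1 : x * s = x * st x := by
    have c := idem_comm (x * st x) (x * s) (idem_P x) hxs
    calc x * s = (x * st x * x) * s := by rw [tri]
    _ = (x * st x) * (x * s) := by simp [mul_assoc]
    _ = (x * s) * (x * st x) := c
    _ = (x * s * x) * st x := by simp [mul_assoc]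
    _ = x * st x := by rw [h1]
  have step2 : s = st x * x * s := by
    have c2 := idem_comm (s * x) (st x * x) hsx (idem_st_mul x)
    calc s = s * x * s := h2.symm
    _ = s * (x * st x * x) * s := by rw [tri]
    _ = ((s * x) * (st x * x)) * s := by simp [mul_assoc]
    _ = ((st x * x) * (s * x)) * s := by rw [c2]
    _ = (st x * x) * (s * x * s) := by simp [mul_assoc]
    _ = st x * x * s := by rw [h2]
  calc s = st x * x * s := step2
  _ = st x * (x * s) := by rw [mul_assoc]
  _ = st x * (x * st x) := by rw [step1]
  _ = st x * x * st x := by rw [← mul_assoc]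
  _ = st x := tri' x

lemma phi_st (φ : Monoid.End (QV A)) (x : QV A) : φ (st x) = st (φ x) := by
  apply st_unique
  · rw [← map_mul, ← map_mul, tri]
  · rw [← map_mul, ← map_mul, tri']

end Alg

section Red
variable {A : Type*}

lemma idem_conj (p e : QV A) (he : e * e = e) :
    (p * e * st p) * (p * e * st p) = p * e * st p := by
  have hc := idem_comm e (st p * p) he (idem_st_mul p)
  calc (p * e * st p) * (p * e * st p)
      = p * e * ((st p * p) * e) * st p := by simp [mul_assoc]
  _ = p * e * (e * (st p * p)) * st p := by rw [hc]
  _ = p * (e * e) * (st p * p * st p) := by simp [mul_assoc]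
  _ = p * e * st p := by rw [he, tri']

lemma conj_absorb (p e s : QV A) (he : e * e = e) :
    (p * e * st p) * (p * s) = p * e * s := by
  have hc := idem_comm e (st p * p) he (idem_st_mul p)
  calc (p * e * st p) * (p * s) = p * (e * (st p * p)) * s := by simp [mul_assoc]
  _ = p * ((st p * p) * e) * s := by rw [hc]
  _ = (p * st p * p) * e * s := by simp [mul_assoc]
  _ = p * e * s := by rw [tri]

lemma step_le {L₁ L₂ : List (A × Bool)} (h : FreeGroup.Red.Step L₁ L₂) :
    ∃ e : QV A, e * e = e ∧
      (↑(FreeMonoid.ofList L₁) : QV A) = e * ↑(FreeMonoid.ofList L₂) := by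
  cases h with
  | @not P S x b =>
    set p : QV A := ↑(FreeMonoid.ofList P)
    set s : QV A := ↑(FreeMonoid.ofList S)
    set l : QV A := ↑(FreeMonoid.of ((x, b) : A × Bool))
    have hl : st l = ↑(FreeMonoid.of ((x, !b) : A × Bool)) := by
      rw [st_mk, winv_of]
    have hL1 : (↑(FreeMonoid.ofList (P ++ (x, b) :: (x, !b) :: S)) : QV A)
        = p * (l * st l) * s := by
      rw [hl]
      rw [FreeMonoid.ofList_append, FreeMonoid.ofList_cons, FreeMonoid.ofList_cons]
      push_cast [Con.coe_mul]
      simp [mul_assoc]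
      rfl
    have hL2 : (↑(FreeMonoid.ofList (P ++ S)) : QV A) = p * s := by
      rw [FreeMonoid.ofList_append]; push_cast [Con.coe_mul]; rfl
    refine ⟨p * (l * st l) * st p, idem_conj p _ (idem_P l), ?_⟩
    rw [hL1, hL2, conj_absorb p _ s (idem_P l)]

lemma red_le {L₁ L₂ : List (A × Bool)} (h : FreeGroup.Red L₁ L₂) :
    ∃ e : QV A, e * e = e ∧
      (↑(FreeMonoid.ofList L₁) : QV A) = e * ↑(FreeMonoid.ofList L₂) := by
  induction h with
  | refl => exact ⟨1, by simp, by simp⟩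
  | tail _ hstep ih =>
    obtain ⟨e, he, hL⟩ := ih
    obtain ⟨f, hf, hL'⟩ := step_le hstep
    exact ⟨e * f, idem_mul e f he hf, by rw [hL, hL', ← mul_assoc]⟩

end Red

section Main
variable {A : Type*}

lemma sig_eq (σ' : (vagner A).Quotient →* FreeGroup A)
    (hσ : ∀ a : A, σ' (↑(FreeMonoid.of ((a, true) : A × Bool))) = FreeGroup.of a ∧
      σ' (↑(FreeMonoid.of ((a, false) : A × Bool))) = (FreeGroup.of a)⁻¹)
    (u : FreeMonoid (A × Bool)) :
    σ' ↑u = FreeGroup.mk (FreeMonoid.toList u) := by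
  refine FreeMonoid.recOn u ?_ ?_
  · show σ' ↑(1 : FreeMonoid (A × Bool)) = _
    rw [Con.coe_one, map_one, FreeMonoid.toList_one]
    rfl
  · intro p xs ih
    have hp : σ' ↑(FreeMonoid.of p) = FreeGroup.mk [p] := by
      obtain ⟨a, c⟩ := p
      cases c
      · rw [(hσ a).2]
        show (FreeGroup.mk [(a, true)])⁻¹ = _
        rw [FreeGroup.inv_mk]
        rfl
      · exact (hσ a).1
    rw [Con.coe_mul, map_mul, hp, ih, FreeGroup.mul_mk, FreeMonoid.toList_mul,
      FreeMonoid.toList_of]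

lemma key_inj (σ' : (vagner A).Quotient →* FreeGroup A)
    (hσ : ∀ a : A, σ' (↑(FreeMonoid.of ((a, true) : A × Bool))) = FreeGroup.of a ∧
      σ' (↑(FreeMonoid.of ((a, false) : A × Bool))) = (FreeGroup.of a)⁻¹)
    (m n : QV A) (h1 : σ' m = σ' n) (h2 : m * st m = n * st n) : m = n := by
  obtain ⟨u, rfl⟩ : ∃ u : FreeMonoid (A × Bool), (u : QV A) = m := Quotient.exists_rep m
  obtain ⟨v, rfl⟩ : ∃ v : FreeMonoid (A × Bool), (v : QV A) = n := Quotient.exists_rep n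
  rw [sig_eq σ' hσ, sig_eq σ' hσ] at h1
  obtain ⟨L, hu, hv⟩ := FreeGroup.Red.exact.mp h1
  obtain ⟨e, he, hue⟩ := red_le hu
  obtain ⟨f, hf, hvf⟩ := red_le hv
  rw [FreeMonoid.ofList_toList] at hue hvf
  set l : QV A := ↑(FreeMonoid.ofList L)
  have hsq : ∀ (g : QV A), g * g = g →
      (g * l) * st (g * l) = g * (l * st l) := by
    intro g hg
    rw [st_mul, idem_eq_st g hg]
    calc (g * l) * (st l * g) = g * ((l * st l) * g) := by simp [mul_assoc]
    _ = g * (g * (l * st l)) := by rw [idem_comm (l * st l) g (idem_P l) hg]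
    _ = (g * g) * (l * st l) := by rw [← mul_assoc]
    _ = g * (l * st l) := by rw [hg]
  have h3 : e * (l * st l) = f * (l * st l) := by
    rw [← hsq e he, ← hsq f hf, ← hue, ← hvf]
    exact h2
  calc (↑u : QV A) = e * l := hue
  _ = e * (l * st l * l) := by rw [tri]
  _ = (e * (l * st l)) * l := by simp [mul_assoc]
  _ = (f * (l * st l)) * l := by rw [h3]
  _ = f * (l * st l * l) := by simp [mul_assoc]
  _ = f * l := by rw [tri]
  _ = ↑v := hvf.symm

end Main

/-- For an endomorphism `φ` of the free inverse monoid `M_A` with induced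
endomorphism `φ̄` of the free group `F_A` (via the canonical surjection `σ'`),
an element `u` is fixed by `φ` iff `u u⁻¹` is fixed by `φ` and `σ'(u)` is fixed
by `φ̄`. -/
theorem fix_iff_idempotent_and_group_fix {A : Type*} [Fintype A]
    (σ' : (vagner A).Quotient →* FreeGroup A)
    (hσ : ∀ a : A, σ' (↑(FreeMonoid.of ((a, true) : A × Bool))) = FreeGroup.of a ∧
      σ' (↑(FreeMonoid.of ((a, false) : A × Bool))) = (FreeGroup.of a)⁻¹)
    (φ : Monoid.End (vagner A).Quotient) (φb : Monoid.End (FreeGroup A))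
    (hcomm : ∀ m : (vagner A).Quotient, σ' (φ m) = φb (σ' m))
    (w : FreeMonoid (A × Bool)) :
    φ (↑w) = (↑w : (vagner A).Quotient) ↔
      (φ (↑(w * winv w)) = (↑(w * winv w) : (vagner A).Quotient) ∧
        φb (σ' ↑w) = σ' ↑w) := by
  have hw : (↑(w * winv w) : QV A) = ↑w * st (↑w : QV A) := by
    rw [Con.coe_mul, st_mk]
  constructor
  · intro h
    constructor
    · rw [hw, map_mul, phi_st, h]
    · rw [← hcomm, h]
  · rintro ⟨h1, h2⟩
    rw [hw] at h1
    apply key_inj σ' hσ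
    · rw [hcomm, h2]
    · rw [← phi_st φ, ← map_mul, h1]
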